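/- If the vertex cover ideal J(G) of a finite simple graph G without isolated vertices is minimally generated by exactly two monomials, then G is a complete bipartite graph. -/

import Mathlib

open Finset MvPolynomial

variable {V : Type} [Fintype V] [DecidableEq V]

/-- `W` is a vertex cover of `G`: every edge meets `W`. -/
def isVertexCover (G : SimpleGraph V) (W : Finset V) : Prop :=
  ∀ v w, G.Adj v w → v ∈ W ∨ w ∈ W

/-- `W` is a minimal vertex cover of `G`. -/
def isMinVertexCover (G : SimpleGraph V) (W : Finset V) : Prop :=
  isVertexCover G W ∧ ∀ W' ⊆ W, isVertexCover G W' → W' = W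

/-- The vertex cover ideal `J(G)`, generated by the squarefree monomials `x_W`
for `W` a minimal vertex cover of `G`. -/
noncomputable def coverIdeal (K : Type) [Field K] (G : SimpleGraph V) :
    Ideal (MvPolynomial V K) :=
  Ideal.span {p | ∃ W : Finset V, isMinVertexCover G W ∧ p = ∏ i ∈ W, X i}

-- helpers
noncomputable def dF (W : Finset V) : V →₀ ℕ := ∑ i ∈ W, Finsupp.single i 1

lemma dF_apply (W : Finset V) (v : V) : dF W v = if v ∈ W then 1 else 0 := by
  classical
  simp [dF, Finsupp.single_apply, Finset.sum_ite_eq, Finsupp.finset_sum_apply]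

lemma dF_le {W W' : Finset V} : dF W ≤ dF W' ↔ W ⊆ W' := by
  constructor
  · intro h v hv
    have := h v
    rw [dF_apply, dF_apply, if_pos hv] at this
    by_contra hv'
    rw [if_neg hv'] at this
    omega
  · intro h v
    rw [dF_apply, dF_apply]
    split_ifs with h1 h2
    · omega
    · exact absurd (h h1) h2
    · omega
    · omega

lemma dF_inj {W W' : Finset V} (h : dF W = dF W') : W = W' :=
  subset_antisymm (dF_le.mp h.le) (dF_le.mp h.ge)

lemma prodX_eq {K : Type} [CommSemiring K] (W : Finset V) :
    (∏ i ∈ W, X i : MvPolynomial V K) = monomial (dF W) 1 := by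
  classical
  induction W using Finset.cons_induction with
  | empty => simp [dF]
  | cons a s ha ih =>
      rw [Finset.prod_cons, ih]
      rw [show dF (Finset.cons a s ha) = Finsupp.single a 1 + dF s from Finset.sum_cons ha]
      rw [X, monomial_mul, one_mul]

set_option linter.unusedSectionVars false

lemma exists_min_cover_subset (G : SimpleGraph V) (W : Finset V) (hW : isVertexCover G W) :
    ∃ W', W' ⊆ W ∧ isMinVertexCover G W' := by
  induction W using Finset.strongInductionOn with
  | _ W ih =>
    by_cases h : ∀ W' ⊆ W, isVertexCover G W' → W' = W
    · exact ⟨W, subset_rfl, hW, h⟩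
    · push_neg at h
      obtain ⟨W', hsub, hcov, hne⟩ := h
      obtain ⟨W'', h1, h2⟩ := ih W' (ssubset_of_subset_of_ne hsub hne) hcov
      exact ⟨W'', h1.trans hsub, h2⟩

lemma indep_avoid (G : SimpleGraph V) (S : Finset V)
    (hS : ∀ v ∈ S, ∀ w ∈ S, ¬ G.Adj v w) :
    ∃ W, isMinVertexCover G W ∧ ∀ v ∈ S, v ∉ W := by
  have hcov : isVertexCover G Sᶜ := by
    intro v w hvw
    by_contra h
    push_neg at h
    simp only [Finset.mem_compl, not_not] at h
    exact hS v h.1 w h.2 hvw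
  obtain ⟨W, hsub, hmin⟩ := exists_min_cover_subset G Sᶜ hcov
  exact ⟨W, hmin, fun v hv hvW => (Finset.mem_compl.mp (hsub hvW)) hv⟩

lemma key_coeff {K : Type} [Field K] {G : SimpleGraph V} {Wi : Finset V}
    (hWi : isMinVertexCover G Wi) {p : MvPolynomial V K} (hp : p ∈ coverIdeal K G) :
    ∀ a : MvPolynomial V K,
      coeff (dF Wi) (a * p) = constantCoeff a * coeff (dF Wi) p := by
  induction hp using Submodule.span_induction with
  | mem x hx =>
      obtain ⟨W, hWmin, rfl⟩ := hx
      intro a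
      rw [prodX_eq, coeff_mul_monomial']
      by_cases h : dF W ≤ dF Wi
      · have hWW : W = Wi := hWi.2 W (dF_le.mp h) hWmin.1
        subst hWW
        rw [if_pos le_rfl]
        simp [coeff_monomial, constantCoeff_eq]
      · have hne : dF W ≠ dF Wi := fun he => h he.le
        rw [if_neg h, coeff_monomial, if_neg hne, mul_zero]
  | zero => intro a; simp
  | add x y hx hy ihx ihy =>
      intro a
      rw [mul_add, coeff_add, coeff_add, ihx a, ihy a, mul_add]
  | smul r x hx ih =>
      intro a
      rw [smul_eq_mul, ← mul_assoc, ih (a * r), map_mul, mul_assoc, ← ih r]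

lemma not_three_covers {K : Type} [Field K] {G : SimpleGraph V}
    {m₁ m₂ : MvPolynomial V K} (hspan : coverIdeal K G = Ideal.span {m₁, m₂})
    {W₁ W₂ W₃ : Finset V} (h1 : isMinVertexCover G W₁) (h2 : isMinVertexCover G W₂)
    (h3 : isMinVertexCover G W₃) (h12 : W₁ ≠ W₂) (h13 : W₁ ≠ W₃) (h23 : W₂ ≠ W₃) :
    False := by
  have hm₁ : m₁ ∈ coverIdeal K G := by
    rw [hspan]; exact Ideal.subset_span (by simp)
  have hm₂ : m₂ ∈ coverIdeal K G := by
    rw [hspan]; exact Ideal.subset_span (by simp)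
  have hx : ∀ W : Finset V, isMinVertexCover G W →
      ∃ a b : MvPolynomial V K, a * m₁ + b * m₂ = ∏ i ∈ W, X i := by
    intro W hW
    rw [← Ideal.mem_span_pair, ← hspan]
    exact Ideal.subset_span ⟨W, hW, rfl⟩
  obtain ⟨a₁, b₁, e₁⟩ := hx W₁ h1
  obtain ⟨a₂, b₂, e₂⟩ := hx W₂ h2
  obtain ⟨a₃, b₃, e₃⟩ := hx W₃ h3
  set u₁ := coeff (dF W₁) m₁ with hu₁
  set u₂ := coeff (dF W₂) m₁ with hu₂
  set u₃ := coeff (dF W₃) m₁ with hu₃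
  set v₁ := coeff (dF W₁) m₂ with hv₁
  set v₂ := coeff (dF W₂) m₂ with hv₂
  set v₃ := coeff (dF W₃) m₂ with hv₃
  have main : ∀ (Wi Wj : Finset V), isMinVertexCover G Wi →
      ∀ a b : MvPolynomial V K, a * m₁ + b * m₂ = ∏ i ∈ Wj, X i →
      constantCoeff a * coeff (dF Wi) m₁ + constantCoeff b * coeff (dF Wi) m₂
        = if Wj = Wi then 1 else 0 := by
    intro Wi Wj hWi a b he
    have := congrArg (coeff (dF Wi)) he
    rw [coeff_add, key_coeff hWi hm₁ a, key_coeff hWi hm₂ b, prodX_eq, coeff_monomial] at this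
    rw [this]
    by_cases h : Wj = Wi
    · subst h; rw [if_pos rfl, if_pos rfl]
    · rw [if_neg h, if_neg (fun he' => h (dF_inj he'))]
  have E11 := main W₁ W₁ h1 a₁ b₁ e₁
  have E21 := main W₂ W₁ h2 a₁ b₁ e₁
  have E31 := main W₃ W₁ h3 a₁ b₁ e₁
  have E12 := main W₁ W₂ h1 a₂ b₂ e₂
  have E22 := main W₂ W₂ h2 a₂ b₂ e₂
  have E32 := main W₃ W₂ h3 a₂ b₂ e₂
  have E13 := main W₁ W₃ h1 a₃ b₃ e₃
  have E23 := main W₂ W₃ h2 a₃ b₃ e₃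
  have E33 := main W₃ W₃ h3 a₃ b₃ e₃
  rw [if_pos rfl] at E11 E22 E33
  rw [if_neg h12] at E21
  rw [if_neg h13] at E31
  rw [if_neg (Ne.symm h12)] at E12
  rw [if_neg h23] at E32
  rw [if_neg (Ne.symm h13)] at E13
  rw [if_neg (Ne.symm h23)] at E23
  have hdet : (0 : K) = 1 := by
    calc (0 : K)
        = (constantCoeff a₁ * u₁ + constantCoeff b₁ * v₁) *
            ((constantCoeff a₂ * u₂ + constantCoeff b₂ * v₂) *
              (constantCoeff a₃ * u₃ + constantCoeff b₃ * v₃) -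
             (constantCoeff a₃ * u₂ + constantCoeff b₃ * v₂) *
              (constantCoeff a₂ * u₃ + constantCoeff b₂ * v₃))
          - (constantCoeff a₂ * u₁ + constantCoeff b₂ * v₁) *
            ((constantCoeff a₁ * u₂ + constantCoeff b₁ * v₂) *
              (constantCoeff a₃ * u₃ + constantCoeff b₃ * v₃) -
             (constantCoeff a₃ * u₂ + constantCoeff b₃ * v₂) *
              (constantCoeff a₁ * u₃ + constantCoeff b₁ * v₃))
          + (constantCoeff a₃ * u₁ + constantCoeff b₃ * v₁) *
            ((constantCoeff a₁ * u₂ + constantCoeff b₁ * v₂) *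
              (constantCoeff a₂ * u₃ + constantCoeff b₂ * v₃) -
             (constantCoeff a₂ * u₂ + constantCoeff b₂ * v₂) *
              (constantCoeff a₁ * u₃ + constantCoeff b₁ * v₃)) := by ring
      _ = 1 := by rw [E11, E12, E13, E21, E22, E23, E31, E32, E33]; ring
  exact zero_ne_one hdet


/-- `G` is a complete bipartite graph: the vertices split into two nonempty parts with
all edges between the parts and none within. -/
def IsCompleteBipartite (G : SimpleGraph V) : Prop :=
  ∃ W : Finset V, W ≠ ∅ ∧ Wᶜ ≠ ∅ ∧
    ∀ v w, G.Adj v w ↔ ((v ∈ W ∧ w ∉ W) ∨ (v ∉ W ∧ w ∈ W))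

/-- If the vertex cover ideal `J(G)` of a graph `G` without isolated vertices is minimally
generated by exactly two monomials, then `G` is a complete bipartite graph. -/
theorem completeBipartite_of_two_generators (K : Type) [Field K] (G : SimpleGraph V)
    (hG : ∀ v, ∃ w, G.Adj v w)
    (hgen : ∃ m₁ m₂ : MvPolynomial V K, m₁ ≠ m₂ ∧
      coverIdeal K G = Ideal.span {m₁, m₂} ∧ ∀ m : MvPolynomial V K,
        coverIdeal K G ≠ Ideal.span {m}) :
    IsCompleteBipartite G := by
  obtain ⟨m₁, m₂, hne, hspan, hnprin⟩ := hgen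
  -- there are at least two minimal vertex covers
  have huniv : isVertexCover G Finset.univ := fun v w _ => Or.inl (Finset.mem_univ v)
  obtain ⟨W₀, -, hW₀⟩ := exists_min_cover_subset G Finset.univ huniv
  by_cases huniq : ∀ W, isMinVertexCover G W → W = W₀
  · exfalso
    apply hnprin (∏ i ∈ W₀, X i)
    have : {p : MvPolynomial V K | ∃ W : Finset V, isMinVertexCover G W ∧ p = ∏ i ∈ W, X i}
        = {∏ i ∈ W₀, X i} := by
      ext p
      constructor
      · rintro ⟨W, hW, rfl⟩
        rw [huniq W hW]; rfl
      · rintro rfl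
        exact ⟨W₀, hW₀, rfl⟩
    rw [coverIdeal, this]
  push_neg at huniq
  obtain ⟨W₁, hW₁, hW₁₀⟩ := huniq
  -- exactly two minimal covers: W₀ and W₁
  have honly : ∀ W, isMinVertexCover G W → W = W₀ ∨ W = W₁ := by
    intro W hW
    by_contra h
    push_neg at h
    exact not_three_covers hspan hW₀ hW₁ hW (Ne.symm hW₁₀) (Ne.symm h.1) (Ne.symm h.2)
  -- every vertex is in W₀ or W₁
  have hunion : ∀ v, v ∈ W₀ ∨ v ∈ W₁ := by
    intro v
    obtain ⟨w, hvw⟩ := hG v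
    obtain ⟨C, hC, hav⟩ := indep_avoid G {w} (by
      intro a ha b hb
      rw [Finset.mem_singleton] at ha hb
      subst ha; subst hb; exact G.loopless.irrefl _)
    have hwC : w ∉ C := hav w (Finset.mem_singleton_self w)
    have hvC : v ∈ C := (hC.1 v w hvw).resolve_right hwC
    rcases honly C hC with rfl | rfl
    · exact Or.inl hvC
    · exact Or.inr hvC
  -- no vertex is in both
  have hdisj : ∀ v, ¬(v ∈ W₀ ∧ v ∈ W₁) := by
    rintro v ⟨hv0, hv1⟩
    obtain ⟨C, hC, hav⟩ := indep_avoid G {v} (by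
      intro a ha b hb
      rw [Finset.mem_singleton] at ha hb
      subst ha; subst hb; exact G.loopless.irrefl _)
    have hvC : v ∉ C := hav v (Finset.mem_singleton_self v)
    rcases honly C hC with rfl | rfl
    · exact hvC hv0
    · exact hvC hv1
  have hcompl : W₁ = W₀ᶜ := by
    ext v
    rw [Finset.mem_compl]
    constructor
    · intro h1 h0; exact hdisj v ⟨h0, h1⟩
    · intro h0; exact (hunion v).resolve_left h0
  refine ⟨W₀, ?_, ?_, ?_⟩
  · -- W₀ ≠ ∅
    intro h
    cases isEmpty_or_nonempty V with
    | inl hV =>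
        apply hW₁₀
        rw [h, Finset.eq_empty_of_isEmpty W₁]
    | inr hV =>
        obtain ⟨v⟩ := hV
        obtain ⟨w, hvw⟩ := hG v
        rcases hW₀.1 v w hvw with hv | hw
        · rw [h] at hv; exact absurd hv (Finset.notMem_empty v)
        · rw [h] at hw; exact absurd hw (Finset.notMem_empty w)
  · -- W₀ᶜ ≠ ∅
    intro h
    rw [← hcompl] at h
    cases isEmpty_or_nonempty V with
    | inl hV =>
        apply hW₁₀
        rw [h, Finset.eq_empty_of_isEmpty W₀]
    | inr hV =>
        obtain ⟨v⟩ := hV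
        obtain ⟨w, hvw⟩ := hG v
        rcases hW₁.1 v w hvw with hv | hw
        · rw [h] at hv; exact absurd hv (Finset.notMem_empty v)
        · rw [h] at hw; exact absurd hw (Finset.notMem_empty w)
  · intro v w
    constructor
    · intro hvw
      have hc0 := hW₀.1 v w hvw
      have hc1 := hW₁.1 v w hvw
      rw [hcompl, Finset.mem_compl, Finset.mem_compl] at hc1
      tauto
    · intro h
      by_contra hadj
      have hvw : v ≠ w := by
        rintro rfl; tauto
      obtain ⟨C, hC, hav⟩ := indep_avoid G {v, w} (by
        intro a ha b hb
        rw [Finset.mem_insert, Finset.mem_singleton] at ha hb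
        rcases ha with rfl | rfl <;> rcases hb with rfl | rfl
        · exact G.loopless.irrefl _
        · exact hadj
        · exact fun hba => hadj (G.symm.symm _ _ hba)
        · exact G.loopless.irrefl _)
      have hvC : v ∉ C := hav v (by simp)
      have hwC : w ∉ C := hav w (by simp)
      rcases honly C hC with hCe | hCe
      · rcases h with ⟨h1, h2⟩ | ⟨h1, h2⟩
        · exact hvC (by rw [hCe]; exact h1)
        · exact hwC (by rw [hCe]; exact h2)
      · have hCc : C = W₀ᶜ := hCe.trans hcompl
        rcases h with ⟨h1, h2⟩ | ⟨h1, h2⟩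
        · exact hwC (by rw [hCc]; exact Finset.mem_compl.mpr h2)
        · exact hvC (by rw [hCc]; exact Finset.mem_compl.mpr h1)
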